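/- arXiv:2402.14803 — 4 statements merged into one kernel-verified Lean document; each statement's English description precedes it below -/
import Mathlib

section
/- For any fixed t-tuple x of pairwise distinct elements of Fin d, averaging P^{⊗t} |x⟩⟨x| P^{⊗t,†} over a uniformly random permutation P of Fin d yields Λ / Tr(Λ), the maximally mixed state on the distinct subspace. -/
open Matrix
open scoped Classical

/-- `P_σ^{⊗t}` on `(ℂ^d)^{⊗t}` for a permutation `σ` of `Fin d`. -/
noncomputable def Ptensor (d t : ℕ) (σ : Equiv.Perm (Fin d)) :
    Matrix (Fin t → Fin d) (Fin t → Fin d) ℂ :=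
  Matrix.of fun y x => if ∀ i, y i = σ (x i) then 1 else 0

/-- Projector `Λ` onto the span of distinct-tuple basis states of `(ℂ^d)^{⊗t}`. -/
noncomputable def distinctProj (d t : ℕ) :
    Matrix (Fin t → Fin d) (Fin t → Fin d) ℂ :=
  Matrix.of fun a b => if a = b ∧ Function.Injective a then 1 else 0

lemma exists_perm_comp {d t : ℕ} {a b : Fin t → Fin d} (ha : Function.Injective a)
    (hb : Function.Injective b) : ∃ τ : Equiv.Perm (Fin d), ∀ i, τ (a i) = b i := by
  let e : {y // y ∈ Set.range a} ≃ {y // y ∈ Set.range b} :=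
    (Equiv.ofInjective a ha).symm.trans (Equiv.ofInjective b hb)
  refine ⟨e.extendSubtype, fun i => ?_⟩
  rw [Equiv.extendSubtype_apply_of_mem e (a i) ⟨i, rfl⟩]
  simp [e]

lemma fiber_card_eq {d t : ℕ} {x a b : Fin t → Fin d} (ha : Function.Injective a)
    (hb : Function.Injective b) :
    (Finset.univ.filter (fun σ : Equiv.Perm (Fin d) => ⇑σ ∘ x = a)).card =
    (Finset.univ.filter (fun σ : Equiv.Perm (Fin d) => ⇑σ ∘ x = b)).card := by
  obtain ⟨τ, hτ⟩ := exists_perm_comp ha hb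
  apply Finset.card_bij (fun σ _ => τ * σ)
  · intro σ hσ
    simp only [Finset.mem_filter, Finset.mem_univ, true_and] at hσ ⊢
    funext i
    have := congrFun hσ i
    simp only [Function.comp_apply] at this ⊢
    rw [Equiv.Perm.mul_apply, this, hτ]
  · intro σ₁ h₁ σ₂ h₂ hEq
    exact mul_left_cancel hEq
  · intro σ hσ
    refine ⟨τ⁻¹ * σ, ?_, by group⟩
    simp only [Finset.mem_filter, Finset.mem_univ, true_and] at hσ ⊢
    funext i
    have := congrFun hσ i
    simp only [Function.comp_apply] at this ⊢
    rw [Equiv.Perm.mul_apply, this, ← hτ i, Equiv.Perm.inv_def, Equiv.symm_apply_apply]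

lemma fiber_card_mul {d t : ℕ} (x a : Fin t → Fin d) (hx : Function.Injective x)
    (ha : Function.Injective a) :
    (Finset.univ.filter (fun σ : Equiv.Perm (Fin d) => ⇑σ ∘ x = a)).card *
      Nat.descFactorial d t = d.factorial := by
  have hcard : (Finset.univ : Finset (Equiv.Perm (Fin d))).card =
      ∑ b : Fin t → Fin d, (Finset.univ.filter
        (fun σ : Equiv.Perm (Fin d) => ⇑σ ∘ x = b)).card :=
    Finset.card_eq_sum_card_fiberwise (fun σ _ => Finset.mem_univ _)
  have hsplit : ∑ b : Fin t → Fin d, (Finset.univ.filter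
        (fun σ : Equiv.Perm (Fin d) => ⇑σ ∘ x = b)).card =
      ∑ b ∈ Finset.univ.filter (fun b : Fin t → Fin d => Function.Injective b),
        (Finset.univ.filter (fun σ : Equiv.Perm (Fin d) => ⇑σ ∘ x = b)).card := by
    symm
    apply Finset.sum_filter_of_ne
    intro b _ hb
    by_contra hbi
    apply hb
    rw [Finset.card_eq_zero, Finset.filter_eq_empty_iff]
    intro σ _ hσ
    exact hbi (hσ ▸ (σ.injective.comp hx))
  have hconst : ∀ b ∈ Finset.univ.filter (fun b : Fin t → Fin d => Function.Injective b),
      (Finset.univ.filter (fun σ : Equiv.Perm (Fin d) => ⇑σ ∘ x = b)).card =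
      (Finset.univ.filter (fun σ : Equiv.Perm (Fin d) => ⇑σ ∘ x = a)).card := by
    intro b hb
    simp only [Finset.mem_filter] at hb
    exact fiber_card_eq hb.2 ha
  have hinjcard : (Finset.univ.filter
      (fun b : Fin t → Fin d => Function.Injective b)).card = Nat.descFactorial d t := by
    rw [← Fintype.card_subtype]
    rw [Fintype.card_congr (Equiv.subtypeInjectiveEquivEmbedding (Fin t) (Fin d))]
    rw [Fintype.card_embedding_eq]
    simp
  rw [Finset.sum_congr rfl hconst, Finset.sum_const, smul_eq_mul, hinjcard] at hsplit
  have := hcard.trans hsplit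
  rw [Finset.card_univ, Fintype.card_perm, Fintype.card_fin] at this
  rw [mul_comm]
  exact this.symm

lemma ptensor_conj_entry (d t : ℕ) (σ : Equiv.Perm (Fin d)) (x : Fin t → Fin d) :
    Ptensor d t σ * Matrix.single x x 1 * (Ptensor d t σ)ᴴ =
    Matrix.of fun a b => if ⇑σ ∘ x = a ∧ ⇑σ ∘ x = b then 1 else 0 := by
  ext a b
  simp only [Matrix.mul_apply, Matrix.single, Matrix.conjTranspose_apply,
    Ptensor, Matrix.of_apply, ite_and, mul_ite, ite_mul, mul_one, mul_zero, one_mul,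
    zero_mul, Finset.sum_ite_eq, Finset.sum_ite_eq', Finset.mem_univ, if_true,
    star_one, star_zero, apply_ite (star : ℂ → ℂ)]
  rw [Finset.sum_eq_single x]
  · have h1 : (∀ i, a i = σ (x i)) ↔ ⇑σ ∘ x = a :=
      ⟨fun h => funext fun i => (h i).symm, fun h i => (congrFun h i).symm⟩
    have h2 : (∀ i, b i = σ (x i)) ↔ ⇑σ ∘ x = b :=
      ⟨fun h => funext fun i => (h i).symm, fun h i => (congrFun h i).symm⟩
    simp only [if_pos rfl, h1, h2, ← ite_and]
    congr 1
    rw [eq_iff_iff]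
    tauto
  · intro c _ hc
    simp [Ne.symm hc]
  · simp

/-- for a fixed distinct tuple `x`, averaging `P^{⊗t}|x⟩⟨x|P^{⊗t,†}` over a
uniformly random permutation `P` of `Fin d` gives `Λ / Tr Λ`, with `Tr Λ = d!/(d−t)!`. -/
theorem stmt_7 (d t : ℕ) (h : t ≤ d) (x : Fin t → Fin d) (hx : Function.Injective x) :
    ((d.factorial : ℂ))⁻¹ • ∑ σ : Equiv.Perm (Fin d),
        Ptensor d t σ * Matrix.single x x 1 * (Ptensor d t σ)ᴴ =
      (((d.factorial / (d - t).factorial : ℕ) : ℂ))⁻¹ • distinctProj d t := by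
  have hdiv : (d.factorial / (d - t).factorial : ℕ) = Nat.descFactorial d t :=
    (Nat.descFactorial_eq_div h).symm
  ext a b
  rw [Matrix.smul_apply, Matrix.smul_apply, Matrix.sum_apply]
  have hsum : ∑ σ : Equiv.Perm (Fin d),
      ((Ptensor d t σ * Matrix.single x x 1 * (Ptensor d t σ)ᴴ :
        Matrix (Fin t → Fin d) (Fin t → Fin d) ℂ)) a b =
      ∑ σ : Equiv.Perm (Fin d), (if ⇑σ ∘ x = a ∧ ⇑σ ∘ x = b then (1 : ℂ) else 0) :=
    Finset.sum_congr rfl fun σ _ => by rw [ptensor_conj_entry d t σ x]; rfl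
  rw [hsum, hdiv]
  by_cases hab : a = b
  · subst hab
    by_cases hai : Function.Injective a
    · have hboole : ∑ σ : Equiv.Perm (Fin d),
          (if ⇑σ ∘ x = a ∧ ⇑σ ∘ x = a then (1 : ℂ) else 0) =
          ((Finset.univ.filter (fun σ : Equiv.Perm (Fin d) => ⇑σ ∘ x = a)).card : ℂ) := by
        simp only [and_self, Finset.sum_boole]
      rw [hboole]
      have key := fiber_card_mul x a hx hai
      have hkey : ((Finset.univ.filter
          (fun σ : Equiv.Perm (Fin d) => ⇑σ ∘ x = a)).card : ℂ) *
          (Nat.descFactorial d t : ℂ) = (d.factorial : ℂ) := by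
        exact_mod_cast congrArg (Nat.cast : ℕ → ℂ) key
      have hd0 : (d.factorial : ℂ) ≠ 0 := Nat.cast_ne_zero.mpr d.factorial_ne_zero
      have hdesc0 : (Nat.descFactorial d t : ℂ) ≠ 0 :=
        Nat.cast_ne_zero.mpr (fun h0 =>
          absurd (Nat.descFactorial_eq_zero_iff_lt.mp h0) (Nat.not_lt.mpr h))
      have hΛ : distinctProj d t a a = 1 := by
        simp [distinctProj, hai]
      rw [hΛ, smul_eq_mul, smul_eq_mul, mul_one]
      field_simp
      linear_combination hkey
    · have hzero : ∑ σ : Equiv.Perm (Fin d),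
          (if ⇑σ ∘ x = a ∧ ⇑σ ∘ x = a then (1 : ℂ) else 0) = 0 := by
        apply Finset.sum_eq_zero
        intro σ _
        rw [if_neg]
        rintro ⟨h1, -⟩
        exact hai (h1 ▸ σ.injective.comp hx)
      have hΛ : distinctProj d t a a = 0 := by
        simp [distinctProj, hai]
      rw [hzero, hΛ]
      simp
  · have hzero : ∑ σ : Equiv.Perm (Fin d),
        (if ⇑σ ∘ x = a ∧ ⇑σ ∘ x = b then (1 : ℂ) else 0) = 0 := by
      apply Finset.sum_eq_zero
      intro σ _
      rw [if_neg]
      rintro ⟨h1, h2⟩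
      exact hab (h1 ▸ h2)
    have hΛ : distinctProj d t a b = 0 := by
      simp [distinctProj, hab]
    rw [hzero, hΛ]
    simp
end

section
/- Combining the random binary-phase twirl and the random permutation twirl: for distinct tuples x, y ∈ (Fin d)^t, the expectation over uniform permutation σ of Fin d and uniform f : Fin d → Bool of (P_σ F_f)^{⊗t} |x⟩⟨y| ((P_σ F_f)^{⊗t})† equals Λ R_τ / Tr(Λ) if y = x_τ for some (necessarily unique) τ ∈ S_t, and 0 otherwise. -/
open Matrix
open scoped Classical

/-- `F_f^{⊗t}` for a Boolean phase function `f : Fin d → Bool`: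
the diagonal operator `|x₁,…,x_t⟩ ↦ (−1)^{f(x₁)+⋯+f(x_t)}|x₁,…,x_t⟩`. -/
noncomputable def Ftensor (d t : ℕ) (f : Fin d → Bool) :
    Matrix (Fin t → Fin d) (Fin t → Fin d) ℂ :=
  Matrix.diagonal fun x => ∏ i, (if f (x i) then (-1 : ℂ) else 1)

/-- Tensor-factor permutation unitary `R_τ` on `(ℂ^d)^{⊗t}`. -/
noncomputable def Rmat (d t : ℕ) (π : Equiv.Perm (Fin t)) :
    Matrix (Fin t → Fin d) (Fin t → Fin d) ℂ :=
  Matrix.of fun b a => if a = b ∘ π then 1 else 0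

noncomputable def sgn (b : Bool) : ℂ := if b then -1 else 1

lemma stmt8_sandwich {d t : ℕ} (M N : Matrix (Fin t → Fin d) (Fin t → Fin d) ℂ)
    (x y a b : Fin t → Fin d) :
    (M * Matrix.single x y (1:ℂ) * N) a b = M a x * N y b := by
  simp only [Matrix.mul_apply, Matrix.single, Matrix.of_apply, ite_and, boole_mul,
    mul_boole, Finset.sum_mul, mul_ite, mul_zero, mul_one]
  rw [Finset.sum_comm]
  simp [Finset.sum_ite_eq, Finset.sum_ite_eq']

lemma stmt8_A_apply (d t : ℕ) (σ : Equiv.Perm (Fin d)) (f : Fin d → Bool) (u v : Fin t → Fin d) :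
    (Ptensor d t σ * Ftensor d t f) u v =
      (if ∀ i, u i = σ (v i) then 1 else 0) * ∏ i, sgn (f (v i)) := by
  simp [Ptensor, Ftensor, Matrix.mul_diagonal, sgn]

lemma stmt8_Ah_apply (d t : ℕ) (σ : Equiv.Perm (Fin d)) (f : Fin d → Bool) (v b : Fin t → Fin d) :
    (Ptensor d t σ * Ftensor d t f)ᴴ v b =
      (if ∀ i, b i = σ (v i) then 1 else 0) * ∏ i, sgn (f (v i)) := by
  rw [Matrix.conjTranspose_apply, stmt8_A_apply, star_mul']
  rw [star_prod]
  simp [sgn, apply_ite (star : ℂ → ℂ), mul_comm]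

lemma stmt8_entry (d t : ℕ) (σ : Equiv.Perm (Fin d)) (f : Fin d → Bool)
    (x y a b : Fin t → Fin d) :
    ((Ptensor d t σ * Ftensor d t f) * Matrix.single x y (1:ℂ) *
        (Ptensor d t σ * Ftensor d t f)ᴴ) a b =
      (if (∀ i, a i = σ (x i)) ∧ (∀ i, b i = σ (y i)) then (1:ℂ) else 0) *
        ((∏ i, sgn (f (x i))) * (∏ i, sgn (f (y i)))) := by
  rw [stmt8_sandwich, stmt8_A_apply, stmt8_Ah_apply, ite_and]
  by_cases h1 : ∀ i, a i = σ (x i) <;> by_cases h2 : ∀ i, b i = σ (y i) <;>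
    simp [h1, h2] <;> ring

lemma stmt8_prod_range {d t : ℕ} (x : Fin t → Fin d) (hx : Function.Injective x)
    (g : Fin d → ℂ) :
    ∏ i, g (x i) = ∏ z : Fin d, if z ∈ Set.range x then g z else 1 := by
  rw [← Finset.prod_image (f := g) (g := x) (s := Finset.univ) (fun a _ b _ h => hx h),
    show Finset.image x Finset.univ = Finset.univ ∩ Finset.image x Finset.univ from
      (Finset.univ_inter _).symm, ← Finset.prod_ite_mem]
  apply Finset.prod_congr rfl
  intro z _
  congr 1
  simp [Set.mem_range, eq_comm]

lemma stmt8_fsum {d t : ℕ} (x y : Fin t → Fin d) (hx : Function.Injective x)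
    (hy : Function.Injective y) :
    ∑ f : Fin d → Bool, (∏ i, sgn (f (x i))) * (∏ i, sgn (f (y i))) =
      if Set.range x = Set.range y then (2:ℂ)^d else 0 := by
  set g : Fin d → Bool → ℂ := fun z b =>
    (if z ∈ Set.range x then sgn b else 1) * (if z ∈ Set.range y then sgn b else 1) with hg
  have key : ∀ f : Fin d → Bool, (∏ i, sgn (f (x i))) * (∏ i, sgn (f (y i))) =
      ∏ z : Fin d, g z (f z) := by
    intro f
    rw [stmt8_prod_range x hx (fun z => sgn (f z)), stmt8_prod_range y hy (fun z => sgn (f z)),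
      Finset.prod_mul_distrib]
  simp only [key]
  have := (Finset.prod_univ_sum (fun _ : Fin d => (Finset.univ : Finset Bool)) g).symm
  rw [Fintype.piFinset_univ] at this
  rw [this]
  have factor : ∀ z : Fin d, (∑ b : Bool, g z b) =
      if (z ∈ Set.range x ↔ z ∈ Set.range y) then 2 else 0 := by
    intro z
    by_cases h1 : z ∈ Set.range x <;> by_cases h2 : z ∈ Set.range y <;>
      · simp only [Set.mem_range] at h1 h2 ⊢
        simp [hg, sgn, h1, h2, Fintype.sum_bool, one_add_one_eq_two]
  simp only [factor]
  by_cases h : Set.range x = Set.range y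
  · simp [h, Finset.prod_const]
  · obtain ⟨z, hz⟩ : ∃ z, ¬(z ∈ Set.range x ↔ z ∈ Set.range y) := by
      by_contra hc
      push_neg at hc
      exact h (Set.ext fun z => (hc z))
    rw [if_neg h]
    refine Finset.prod_eq_zero (Finset.mem_univ z) ?_
    rw [if_neg hz]

lemma stmt8_exists_sigma0 {d t : ℕ} (x a : Fin t → Fin d) (hx : Function.Injective x)
    (ha : Function.Injective a) : ∃ σ₀ : Equiv.Perm (Fin d), ∀ i, σ₀ (x i) = a i := by
  classical
  let ex : Fin t ≃ Set.range x := Equiv.ofInjective x hx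
  let ea : Fin t ≃ Set.range a := Equiv.ofInjective a ha
  have hcard : Fintype.card ↥(Set.range x)ᶜ = Fintype.card ↥(Set.range a)ᶜ := by
    rw [Fintype.card_compl_set, Fintype.card_compl_set,
      ← Fintype.card_congr ex, ← Fintype.card_congr ea]
  let ec : ↥(Set.range x)ᶜ ≃ ↥(Set.range a)ᶜ := Fintype.equivOfCardEq hcard
  let σ₀ : Equiv.Perm (Fin d) :=
    ((Equiv.sumCompl (· ∈ Set.range x)).symm.trans
      ((Equiv.sumCongr (ex.symm.trans ea) ec).trans (Equiv.sumCompl (· ∈ Set.range a))))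
  refine ⟨σ₀, fun i => ?_⟩
  have h1 : (Equiv.sumCompl (· ∈ Set.range x)).symm (x i) =
      Sum.inl ⟨x i, Set.mem_range_self i⟩ :=
    Equiv.sumCompl_symm_apply_of_pos (Set.mem_range_self i)
  have h2 : ex.symm ⟨x i, Set.mem_range_self i⟩ = i := by
    apply ex.injective
    rw [Equiv.apply_symm_apply]
    exact Subtype.ext rfl
  have h3 : (ex.symm.trans ea) ⟨x i, Set.mem_range_self i⟩ = ⟨a i, Set.mem_range_self i⟩ := by
    rw [Equiv.trans_apply, h2]
    exact Subtype.ext rfl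
  show (Equiv.sumCompl (· ∈ Set.range a))
      (((ex.symm.trans ea).sumCongr ec) ((Equiv.sumCompl (· ∈ Set.range x)).symm (x i))) = a i
  rw [h1, Equiv.sumCongr_apply, Sum.map_inl, h3, Equiv.sumCompl_apply_inl]

lemma stmt8_count_sigma {d t : ℕ} (x a : Fin t → Fin d) (hx : Function.Injective x)
    (ha : Function.Injective a) :
    (∑ σ : Equiv.Perm (Fin d), if ∀ i, a i = σ (x i) then (1:ℂ) else 0) =
      ((d-t).factorial : ℂ) := by
  classical
  obtain ⟨σ₀, hσ₀⟩ := stmt8_exists_sigma0 x a hx ha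
  rw [Finset.sum_boole]
  norm_cast
  have : (Finset.univ.filter fun σ : Equiv.Perm (Fin d) => ∀ i, a i = σ (x i)).card =
      Fintype.card {σ : Equiv.Perm (Fin d) // ∀ i, a i = σ (x i)} := by
    rw [Fintype.card_subtype]
  rw [this]
  have e1 : {σ : Equiv.Perm (Fin d) // ∀ i, a i = σ (x i)} ≃
      {π : Equiv.Perm (Fin d) // ∀ i, π (x i) = x i} :=
  { toFun := fun σ => ⟨σ₀⁻¹ * σ.1, fun i => by
      simp [Equiv.Perm.mul_apply, ← σ.2 i, ← hσ₀ i]⟩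
    invFun := fun π => ⟨σ₀ * π.1, fun i => by
      simp [Equiv.Perm.mul_apply, π.2 i, hσ₀ i]⟩
    left_inv := fun σ => by simp
    right_inv := fun π => by simp }
  have e2 : {π : Equiv.Perm (Fin d) // ∀ i, π (x i) = x i} ≃
      {π : Equiv.Perm (Fin d) // ∀ z, ¬ (z ∉ Set.range x) → π z = z} := by
    apply Equiv.subtypeEquivRight
    intro π
    constructor
    · intro hp z hz
      rw [not_not] at hz
      obtain ⟨i, rfl⟩ := hz
      exact hp i
    · intro hp i
      exact hp (x i) (by simp)
  have e3 := (Equiv.Perm.subtypeEquivSubtypePerm (fun z : Fin d => z ∉ Set.range x))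
  rw [Fintype.card_congr ((e1.trans e2).trans e3.symm), Fintype.card_perm]
  congr 1
  have : Fintype.card {z : Fin d // z ∉ Set.range x} = d - t := by
    rw [Fintype.card_subtype_compl]
    have : Fintype.card {z : Fin d // z ∈ Set.range x} = t := by
      rw [← Fintype.card_congr (Equiv.ofInjective x hx)]
      simp
    rw [this]
    simp
  rw [this]

lemma stmt8_sigma_sum {d t : ℕ} (x y a b : Fin t → Fin d) (hx : Function.Injective x)
    (τ : Equiv.Perm (Fin t)) (hτ : ∀ i, y i = x (τ i)) :
    (∑ σ : Equiv.Perm (Fin d),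
        if (∀ i, a i = σ (x i)) ∧ (∀ i, b i = σ (y i)) then (1:ℂ) else 0) =
      if (∀ i, b i = a (τ i)) ∧ Function.Injective a then ((d-t).factorial : ℂ) else 0 := by
  by_cases hab : (∀ i, b i = a (τ i)) ∧ Function.Injective a
  · rw [if_pos hab, ← stmt8_count_sigma x a hx hab.2]
    apply Finset.sum_congr rfl
    intro σ _
    refine if_congr ⟨fun h => h.1, fun h1 => ⟨h1, fun i => ?_⟩⟩ rfl rfl
    rw [hτ i, ← h1 (τ i)]
    exact hab.1 i
  · rw [if_neg hab]
    apply Finset.sum_eq_zero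
    intro σ _
    rw [if_neg]
    rintro ⟨h1, h2⟩
    apply hab
    refine ⟨fun i => by rw [h2 i, hτ i, ← h1 (τ i)], fun i j hij => ?_⟩
    apply hx
    apply σ.injective
    rw [← h1 i, ← h1 j, hij]

lemma stmt8_range_eq_of_tau {d t : ℕ} (x y : Fin t → Fin d) (τ : Equiv.Perm (Fin t))
    (hτ : ∀ i, y i = x (τ i)) : Set.range x = Set.range y := by
  ext z
  constructor
  · rintro ⟨i, rfl⟩
    exact ⟨τ.symm i, by rw [hτ, Equiv.apply_symm_apply]⟩
  · rintro ⟨i, rfl⟩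
    exact ⟨τ i, (hτ i).symm⟩

lemma stmt8_tau_of_range_eq {d t : ℕ} (x y : Fin t → Fin d) (hx : Function.Injective x)
    (hy : Function.Injective y) (h : Set.range x = Set.range y) :
    ∃ τ : Equiv.Perm (Fin t), ∀ i, y i = x (τ i) := by
  have hmem : ∀ i, ∃ j, x j = y i := fun i => by
    have hi : y i ∈ Set.range x := by rw [h]; exact Set.mem_range_self i
    exact hi
  choose g hg using hmem
  have hginj : Function.Injective g := fun i j hij => hy (by rw [← hg i, ← hg j, hij])
  exact ⟨Equiv.ofBijective g (Finite.injective_iff_bijective.mp hginj),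
    fun i => (hg i).symm⟩

lemma stmt8_projR_entry (d t : ℕ) (τ : Equiv.Perm (Fin t)) (a b : Fin t → Fin d) :
    (distinctProj d t * Rmat d t τ) a b =
      if (∀ i, b i = a (τ i)) ∧ Function.Injective a then 1 else 0 := by
  rw [Matrix.mul_apply]
  have : ∀ c, distinctProj d t a c * Rmat d t τ c b =
      if a = c then (if (∀ i, b i = a (τ i)) ∧ Function.Injective a then (1:ℂ) else 0)
      else 0 := by
    intro c
    simp only [distinctProj, Rmat, Matrix.of_apply]
    by_cases hac : a = c
    · subst hac
      by_cases hb : b = a ∘ τ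
      · simp [hb, funext_iff, Function.comp]
      · have : ¬ ∀ i, b i = a (τ i) := fun hc => hb (funext hc)
        simp [hb, this]
    · simp [hac, ite_and]
  simp only [this]
  simp

/-- for distinct tuples `x, y`, the average over a uniform permutation `σ` of
`Fin d` and uniform `f : Fin d → Bool` of `(P_σ F_f)^{⊗t} |x⟩⟨y| ((P_σ F_f)^{⊗t})†` equals
`Λ R_τ / Tr Λ` if `y = x_τ` for some (necessarily unique) `τ ∈ S_t`, and `0` otherwise. -/
theorem stmt_8 (d t : ℕ) (h : t ≤ d) (x y : Fin t → Fin d)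
    (hx : Function.Injective x) (hy : Function.Injective y) :
    (∀ τ : Equiv.Perm (Fin t), (∀ i, y i = x (τ i)) →
      ((d.factorial : ℂ) * 2 ^ d)⁻¹ • ∑ σ : Equiv.Perm (Fin d), ∑ f : Fin d → Bool,
          (Ptensor d t σ * Ftensor d t f) * Matrix.single x y 1 *
            (Ptensor d t σ * Ftensor d t f)ᴴ =
        (((d.factorial / (d - t).factorial : ℕ) : ℂ))⁻¹ •
          (distinctProj d t * Rmat d t τ)) ∧
    ((¬ ∃ τ : Equiv.Perm (Fin t), ∀ i, y i = x (τ i)) →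
      ((d.factorial : ℂ) * 2 ^ d)⁻¹ • ∑ σ : Equiv.Perm (Fin d), ∑ f : Fin d → Bool,
          (Ptensor d t σ * Ftensor d t f) * Matrix.single x y 1 *
            (Ptensor d t σ * Ftensor d t f)ᴴ = 0) := by
  have hrearr : ∀ a b : Fin t → Fin d,
      (∑ σ : Equiv.Perm (Fin d), ∑ f : Fin d → Bool,
        ((Ptensor d t σ * Ftensor d t f) * Matrix.single x y (1:ℂ) *
          (Ptensor d t σ * Ftensor d t f)ᴴ) a b) =
      (∑ σ : Equiv.Perm (Fin d),
          if (∀ i, a i = σ (x i)) ∧ (∀ i, b i = σ (y i)) then (1:ℂ) else 0) *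
        (∑ f : Fin d → Bool, (∏ i, sgn (f (x i))) * (∏ i, sgn (f (y i)))) := by
    intro a b
    rw [Finset.sum_mul_sum]
    apply Finset.sum_congr rfl
    intro σ _
    apply Finset.sum_congr rfl
    intro f _
    exact stmt8_entry d t σ f x y a b
  constructor
  · intro τ hτ
    have hrange : Set.range x = Set.range y := stmt8_range_eq_of_tau x y τ hτ
    ext a b
    rw [Matrix.smul_apply, Matrix.sum_apply]
    simp only [Matrix.sum_apply]
    rw [hrearr a b, stmt8_fsum x y hx hy, if_pos hrange,
      stmt8_sigma_sum x y a b hx τ hτ, Matrix.smul_apply, stmt8_projR_entry,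
      smul_eq_mul, smul_eq_mul]
    have hdvd : (d - t).factorial ∣ d.factorial :=
      Nat.factorial_dvd_factorial (Nat.sub_le d t)
    have hne1 : ((d - t).factorial : ℂ) ≠ 0 := by
      exact_mod_cast Nat.cast_ne_zero.mpr (d - t).factorial_ne_zero
    have hne2 : (d.factorial : ℂ) ≠ 0 := by
      exact_mod_cast Nat.cast_ne_zero.mpr d.factorial_ne_zero
    have hne3 : (2:ℂ)^d ≠ 0 := pow_ne_zero d two_ne_zero
    have hcast : ((d.factorial / (d - t).factorial : ℕ) : ℂ) =
        (d.factorial : ℂ) / ((d - t).factorial : ℂ) := by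
      exact_mod_cast Nat.cast_div hdvd hne1
    rw [hcast]
    by_cases hcond : (∀ i, b i = a (τ i)) ∧ Function.Injective a
    · rw [if_pos hcond, if_pos hcond]
      field_simp
    · rw [if_neg hcond, if_neg hcond]
      simp
  · intro hno
    have hrange : Set.range x ≠ Set.range y := fun hr =>
      hno (stmt8_tau_of_range_eq x y hx hy hr)
    ext a b
    rw [Matrix.smul_apply, Matrix.sum_apply]
    simp only [Matrix.sum_apply]
    rw [hrearr a b, stmt8_fsum x y hx hy, if_neg hrange]
    simp
end

section
/- Clifford twirl concentrates on the distinct subspace: for any exact unitary 2-design ensemble {C} on ℂ^d (in particular the Clifford group for d = 2^n) and any t-register state ρ on (ℂ^d)^{⊗t}, Tr[Λ · E_C C^{⊗t} ρ C^{⊗t,†}] ≥ 1 − t(t−1)/d · (d/(d+1)) ≥ 1 − t²/d. -/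
open Matrix
open scoped Classical ComplexOrder

/-- The swap operator `S` on `ℂ^d ⊗ ℂ^d`. -/
noncomputable def swapMat (d : ℕ) :
    Matrix (Fin d × Fin d) (Fin d × Fin d) ℂ :=
  Matrix.of fun p q => if p.1 = q.2 ∧ p.2 = q.1 then 1 else 0

/-- The Haar second-moment twirl `X ↦ E_{U∼Haar} (U⊗U) X (U⊗U)†`, given by its standard
closed form (Weingarten calculus). -/
noncomputable def haarTwirl (d : ℕ)
    (X : Matrix (Fin d × Fin d) (Fin d × Fin d) ℂ) :
    Matrix (Fin d × Fin d) (Fin d × Fin d) ℂ :=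
  (((d : ℂ) * X.trace - (swapMat d * X).trace) / ((d : ℂ) * ((d : ℂ) ^ 2 - 1))) • 1 +
    (((d : ℂ) * (swapMat d * X).trace - X.trace) / ((d : ℂ) * ((d : ℂ) ^ 2 - 1))) •
      swapMat d

/-- `U ⊗ U` on `ℂ^d ⊗ ℂ^d`. -/
noncomputable def kronSq (d : ℕ) (U : Matrix (Fin d) (Fin d) ℂ) :
    Matrix (Fin d × Fin d) (Fin d × Fin d) ℂ :=
  Matrix.of fun p q => U p.1 q.1 * U p.2 q.2

/-- `U^{⊗t}` on `(ℂ^d)^{⊗t}`. -/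
noncomputable def tpow (d t : ℕ) (U : Matrix (Fin d) (Fin d) ℂ) :
    Matrix (Fin t → Fin d) (Fin t → Fin d) ℂ :=
  Matrix.of fun x y => ∏ i, U (x i) (y i)

namespace Stmt16
variable {d t : ℕ}

noncomputable def asm (j k : Fin t) (p : Fin d × Fin d)
    (h : {m : Fin t // m ≠ j ∧ m ≠ k} → Fin d) : Fin t → Fin d :=
  fun m => if hj : m = j then p.1 else if hk : m = k then p.2 else h ⟨m, hj, hk⟩

lemma asm_j (j k : Fin t) (p : Fin d × Fin d) (h : {m : Fin t // m ≠ j ∧ m ≠ k} → Fin d) :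
    asm j k p h j = p.1 := by simp [asm]

lemma asm_k {j k : Fin t} (hjk : j ≠ k) (p : Fin d × Fin d)
    (h : {m : Fin t // m ≠ j ∧ m ≠ k} → Fin d) : asm j k p h k = p.2 := by
  simp [asm, (Ne.symm hjk)]

lemma asm_coe (j k : Fin t) (p : Fin d × Fin d) (h : {m : Fin t // m ≠ j ∧ m ≠ k} → Fin d)
    (m : {m : Fin t // m ≠ j ∧ m ≠ k}) : asm j k p h m.1 = h m := by
  obtain ⟨m, h1, h2⟩ := m
  simp [asm, h1, h2]

lemma asm_bij {j k : Fin t} (hjk : j ≠ k) :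
    Function.Bijective (fun x : (Fin d × Fin d) × ({m : Fin t // m ≠ j ∧ m ≠ k} → Fin d) =>
      asm j k x.1 x.2) := by
  constructor
  · rintro ⟨p, h⟩ ⟨q, g⟩ he
    simp only at he
    refine Prod.ext (Prod.ext ?_ ?_) (funext fun m => ?_)
    · simpa [asm_j] using congrFun he j
    · simpa [asm_k hjk] using congrFun he k
    · simpa [asm_coe] using congrFun he m.1
  · intro a
    refine ⟨⟨(a j, a k), fun m => a m.1⟩, funext fun m => ?_⟩
    simp only [asm]
    split_ifs with h1 h2
    · rw [h1]
    · rw [h2]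
    · rfl

lemma sum_split {M : Type*} [AddCommMonoid M] {j k : Fin t} (hjk : j ≠ k)
    (F : (Fin t → Fin d) → M) :
    ∑ a, F a = ∑ p : Fin d × Fin d, ∑ h : {m : Fin t // m ≠ j ∧ m ≠ k} → Fin d,
      F (asm j k p h) := by
  calc ∑ a, F a
      = ∑ x : (Fin d × Fin d) × ({m : Fin t // m ≠ j ∧ m ≠ k} → Fin d),
          F (asm j k x.1 x.2) :=
        (Fintype.sum_bijective _ (asm_bij hjk) _ _ (fun x => rfl)).symm
    _ = _ := Fintype.sum_prod_type _

lemma prod_split {j k : Fin t} (hjk : j ≠ k) (g : Fin t → ℂ) :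
    ∏ m, g m = g j * g k * ∏ m : {m : Fin t // m ≠ j ∧ m ≠ k}, g m.1 := by
  have hsub : ∏ m ∈ ((Finset.univ.erase j).erase k), g m
      = ∏ m : {m : Fin t // m ≠ j ∧ m ≠ k}, g m.1 := by
    rw [← Finset.prod_subtype (((Finset.univ.erase j).erase k)) (fun m => ?_) g]
    simp only [Finset.mem_erase, Finset.mem_univ, and_true]
    tauto
  calc ∏ m, g m = g j * ∏ m ∈ Finset.univ.erase j, g m :=
        (Finset.mul_prod_erase _ _ (Finset.mem_univ j)).symm
    _ = g j * (g k * ∏ m ∈ (Finset.univ.erase j).erase k, g m) := by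
        rw [← Finset.mul_prod_erase (Finset.univ.erase j) g
          (Finset.mem_erase.mpr ⟨Ne.symm hjk, Finset.mem_univ k⟩)]
    _ = _ := by rw [hsub, mul_assoc]

lemma unit_row {C : Matrix (Fin d) (Fin d) ℂ} (hC : C ∈ Matrix.unitaryGroup (Fin d) ℂ)
    (y z : Fin d) : ∑ x, C x y * (starRingEnd ℂ) (C x z) = if z = y then 1 else 0 := by
  have h1 : star C * C = 1 := Matrix.mem_unitaryGroup_iff'.mp hC
  have h2 := congrFun (congrFun (congrArg (fun M => M) h1) z) y
  simp only [Matrix.mul_apply, Matrix.star_apply, Matrix.one_apply, RCLike.star_def] at h2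
  rw [← h2]
  exact Finset.sum_congr rfl fun x _ => mul_comm _ _

lemma tpow_asm {j k : Fin t} (hjk : j ≠ k) (C : Matrix (Fin d) (Fin d) ℂ)
    (p P : Fin d × Fin d) (h g : {m : Fin t // m ≠ j ∧ m ≠ k} → Fin d) :
    tpow d t C (asm j k p h) (asm j k P g)
      = C p.1 P.1 * C p.2 P.2 * ∏ m : {m : Fin t // m ≠ j ∧ m ≠ k}, C (h m) (g m) := by
  show ∏ m, C (asm j k p h m) (asm j k P g m) = _
  rw [prod_split hjk]
  simp [asm_j, asm_k hjk, asm_coe]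

lemma hsum {j k : Fin t} {C : Matrix (Fin d) (Fin d) ℂ}
    (hC : C ∈ Matrix.unitaryGroup (Fin d) ℂ)
    (g g' : {m : Fin t // m ≠ j ∧ m ≠ k} → Fin d) :
    ∑ h : {m : Fin t // m ≠ j ∧ m ≠ k} → Fin d,
      (∏ m, C (h m) (g m)) * (starRingEnd ℂ) (∏ m, C (h m) (g' m))
      = if g' = g then 1 else 0 := by
  have step1 : ∀ h : {m : Fin t // m ≠ j ∧ m ≠ k} → Fin d,
      (∏ m, C (h m) (g m)) * (starRingEnd ℂ) (∏ m, C (h m) (g' m))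
        = ∏ m, (C (h m) (g m) * (starRingEnd ℂ) (C (h m) (g' m))) := by
    intro h
    rw [map_prod, ← Finset.prod_mul_distrib]
  simp only [step1]
  have step2 : ∑ h : {m : Fin t // m ≠ j ∧ m ≠ k} → Fin d,
      ∏ m, (C (h m) (g m) * (starRingEnd ℂ) (C (h m) (g' m)))
      = ∏ m : {m : Fin t // m ≠ j ∧ m ≠ k},
          ∑ x, (C x (g m) * (starRingEnd ℂ) (C x (g' m))) := by
    rw [Finset.prod_univ_sum]
    rw [Fintype.piFinset_univ]
  rw [step2]
  simp only [fun m => unit_row hC (g m) (g' m)]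
  by_cases hgg : g' = g
  · simp [hgg]
  · obtain ⟨m, hm⟩ := Function.ne_iff.mp hgg
    rw [Finset.prod_eq_zero (Finset.mem_univ m) (by simp [hm]), if_neg hgg]


lemma diag_expand {n m : Type*} [Fintype n] [Fintype m] (A : Matrix m n ℂ)
    (M : Matrix n n ℂ) (i : m) :
    (A * M * Aᴴ) i i = ∑ c, ∑ b, A i b * M b c * (starRingEnd ℂ) (A i c) := by
  simp [Matrix.mul_apply, Matrix.conjTranspose_apply, Finset.sum_mul]

noncomputable def ptr (j k : Fin t) (ρ : Matrix (Fin t → Fin d) (Fin t → Fin d) ℂ) :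
    Matrix (Fin d × Fin d) (Fin d × Fin d) ℂ :=
  Matrix.of fun p q => ∑ h : {m : Fin t // m ≠ j ∧ m ≠ k} → Fin d,
    ρ (asm j k p h) (asm j k q h)

lemma inner_eq {j k : Fin t} (hjk : j ≠ k) {C : Matrix (Fin d) (Fin d) ℂ}
    (hC : C ∈ Matrix.unitaryGroup (Fin d) ℂ)
    (ρ : Matrix (Fin t → Fin d) (Fin t → Fin d) ℂ) (v : Fin d) :
    ∑ h : {m : Fin t // m ≠ j ∧ m ≠ k} → Fin d,
      (tpow d t C * ρ * (tpow d t C)ᴴ) (asm j k (v,v) h) (asm j k (v,v) h)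
      = (kronSq d C * ptr j k ρ * (kronSq d C)ᴴ) (v,v) (v,v) := by
  -- notation
  set S := {m : Fin t // m ≠ j ∧ m ≠ k}
  -- RHS chain
  have rhs1 : (kronSq d C * ptr j k ρ * (kronSq d C)ᴴ) (v,v) (v,v)
      = ∑ r : Fin d × Fin d, ∑ q : Fin d × Fin d,
          (C v q.1 * C v q.2) * (∑ g : S → Fin d, ρ (asm j k q g) (asm j k r g))
            * (starRingEnd ℂ) (C v r.1 * C v r.2) := by
    rw [diag_expand]
    rfl
  have rhs2 : ∀ (r q : Fin d × Fin d),
      (C v q.1 * C v q.2) * (∑ g : S → Fin d, ρ (asm j k q g) (asm j k r g))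
          * (starRingEnd ℂ) (C v r.1 * C v r.2)
      = ∑ g : S → Fin d, ∑ g' : S → Fin d, ∑ h : S → Fin d,
          (C v q.1 * C v q.2 * ∏ m : S, C (h m) (g m))
            * ρ (asm j k q g) (asm j k r g')
            * ((starRingEnd ℂ) (C v r.1) * (starRingEnd ℂ) (C v r.2)
                * (starRingEnd ℂ) (∏ m : S, C (h m) (g' m))) := by
    intro r q
    have key : ∀ g g' : S → Fin d,
        ∑ h : S → Fin d,
          (C v q.1 * C v q.2 * ∏ m : S, C (h m) (g m))
            * ρ (asm j k q g) (asm j k r g')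
            * ((starRingEnd ℂ) (C v r.1) * (starRingEnd ℂ) (C v r.2)
                * (starRingEnd ℂ) (∏ m : S, C (h m) (g' m)))
        = (if g' = g then 1 else 0) *
            ((C v q.1 * C v q.2) * ρ (asm j k q g) (asm j k r g')
              * (starRingEnd ℂ) (C v r.1 * C v r.2)) := by
      intro g g'
      rw [← hsum hC g g', Finset.sum_mul]
      refine Finset.sum_congr rfl fun h _ => ?_
      simp only [_root_.map_mul]
      ring
    simp only [key]
    simp only [boole_mul]
    have collapse : ∀ g : S → Fin d,
        (∑ g' : S → Fin d, if g' = g then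
            ((C v q.1 * C v q.2) * ρ (asm j k q g) (asm j k r g')
              * (starRingEnd ℂ) (C v r.1 * C v r.2)) else 0)
        = (C v q.1 * C v q.2) * ρ (asm j k q g) (asm j k r g)
              * (starRingEnd ℂ) (C v r.1 * C v r.2) := by
      intro g
      rw [Finset.sum_ite_eq' Finset.univ g]
      simp
    simp only [collapse]
    rw [Finset.mul_sum, Finset.sum_mul]
  -- LHS chain
  have lhs1 : ∑ h : S → Fin d,
      (tpow d t C * ρ * (tpow d t C)ᴴ) (asm j k (v,v) h) (asm j k (v,v) h)
      = ∑ h : S → Fin d, ∑ r : Fin d × Fin d, ∑ g' : S → Fin d,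
          ∑ q : Fin d × Fin d, ∑ g : S → Fin d,
          (C v q.1 * C v q.2 * ∏ m : S, C (h m) (g m))
            * ρ (asm j k q g) (asm j k r g')
            * ((starRingEnd ℂ) (C v r.1) * (starRingEnd ℂ) (C v r.2)
                * (starRingEnd ℂ) (∏ m : S, C (h m) (g' m))) := by
    refine Finset.sum_congr rfl fun h _ => ?_
    rw [diag_expand]
    rw [sum_split hjk (fun c => ∑ b, tpow d t C (asm j k (v,v) h) b * ρ b c
      * (starRingEnd ℂ) (tpow d t C (asm j k (v,v) h) c))]
    refine Finset.sum_congr rfl fun r _ => Finset.sum_congr rfl fun g' _ => ?_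
    rw [sum_split hjk (fun b => tpow d t C (asm j k (v,v) h) b
      * ρ b (asm j k r g') * (starRingEnd ℂ) (tpow d t C (asm j k (v,v) h) (asm j k r g')))]
    refine Finset.sum_congr rfl fun q _ => Finset.sum_congr rfl fun g _ => ?_
    rw [tpow_asm hjk, tpow_asm hjk]
    simp only [_root_.map_mul]
    rfl
  have rhs2' := Finset.sum_congr (rfl : (Finset.univ : Finset (Fin d × Fin d)) = _)
    fun r _ => Finset.sum_congr (rfl : (Finset.univ : Finset (Fin d × Fin d)) = _)
      fun q _ => rhs2 r q
  rw [lhs1, rhs1, rhs2']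
  -- now pure reindexing of a 5-fold sum
  have flatL : (∑ x : (S → Fin d) × ((Fin d × Fin d) × ((S → Fin d) ×
        ((Fin d × Fin d) × (S → Fin d)))),
      (C v x.2.2.2.1.1 * C v x.2.2.2.1.2 * ∏ m : S, C (x.1 m) (x.2.2.2.2 m))
        * ρ (asm j k x.2.2.2.1 x.2.2.2.2) (asm j k x.2.1 x.2.2.1)
        * ((starRingEnd ℂ) (C v x.2.1.1) * (starRingEnd ℂ) (C v x.2.1.2)
            * (starRingEnd ℂ) (∏ m : S, C (x.1 m) (x.2.2.1 m))))
      = ∑ h : S → Fin d, ∑ r : Fin d × Fin d, ∑ g' : S → Fin d,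
          ∑ q : Fin d × Fin d, ∑ g : S → Fin d,
          (C v q.1 * C v q.2 * ∏ m : S, C (h m) (g m))
            * ρ (asm j k q g) (asm j k r g')
            * ((starRingEnd ℂ) (C v r.1) * (starRingEnd ℂ) (C v r.2)
                * (starRingEnd ℂ) (∏ m : S, C (h m) (g' m))) := by
    simp only [Fintype.sum_prod_type]
  have flatR : (∑ y : (Fin d × Fin d) × ((Fin d × Fin d) × ((S → Fin d) ×
        ((S → Fin d) × (S → Fin d)))),
      (C v y.2.1.1 * C v y.2.1.2 * ∏ m : S, C (y.2.2.2.2 m) (y.2.2.1 m))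
        * ρ (asm j k y.2.1 y.2.2.1) (asm j k y.1 y.2.2.2.1)
        * ((starRingEnd ℂ) (C v y.1.1) * (starRingEnd ℂ) (C v y.1.2)
            * (starRingEnd ℂ) (∏ m : S, C (y.2.2.2.2 m) (y.2.2.2.1 m))))
      = ∑ r : Fin d × Fin d, ∑ q : Fin d × Fin d, ∑ g : S → Fin d,
          ∑ g' : S → Fin d, ∑ h : S → Fin d,
          (C v q.1 * C v q.2 * ∏ m : S, C (h m) (g m))
            * ρ (asm j k q g) (asm j k r g')
            * ((starRingEnd ℂ) (C v r.1) * (starRingEnd ℂ) (C v r.2)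
                * (starRingEnd ℂ) (∏ m : S, C (h m) (g' m))) := by
    simp only [Fintype.sum_prod_type]
  rw [← flatL, ← flatR]
  refine Fintype.sum_bijective
    (fun x : (S → Fin d) × ((Fin d × Fin d) × ((S → Fin d) × ((Fin d × Fin d) × (S → Fin d)))) =>
      ((x.2.1, (x.2.2.2.1, (x.2.2.2.2, (x.2.2.1, x.1))))
        : (Fin d × Fin d) × ((Fin d × Fin d) × ((S → Fin d) × ((S → Fin d) × (S → Fin d))))))
    ?_ _ _ (fun x => rfl)
  exact (Equiv.mk
    (fun x : (S → Fin d) × ((Fin d × Fin d) × ((S → Fin d) × ((Fin d × Fin d) × (S → Fin d)))) =>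
      ((x.2.1, (x.2.2.2.1, (x.2.2.2.2, (x.2.2.1, x.1))))))
    (fun y => (y.2.2.2.2, (y.1, (y.2.2.2.1, (y.2.1, y.2.2.1)))))
    (by rintro ⟨a, b, c, e, f⟩; rfl) (by rintro ⟨a, b, c, e, f⟩; rfl)).bijective

lemma posSemidef_sum {n ι : Type*} [Fintype n] (s : Finset ι)
    (f : ι → Matrix n n ℂ) (hf : ∀ i ∈ s, (f i).PosSemidef) :
    (∑ i ∈ s, f i).PosSemidef :=
  Finset.sum_induction f _ (fun _ _ ha hb => ha.add hb) Matrix.PosSemidef.zero hf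

lemma psd_diag {n : Type*} [Fintype n] [DecidableEq n] {M : Matrix n n ℂ}
    (h : M.PosSemidef) (a : n) : 0 ≤ M a a := by
  have := h.dotProduct_mulVec_nonneg (Pi.single a 1)
  simpa [Matrix.mulVec, dotProduct, Pi.single_apply] using this

lemma psd_trace_re_nonneg {n : Type*} [Fintype n] [DecidableEq n] {M : Matrix n n ℂ}
    (h : M.PosSemidef) : 0 ≤ M.trace.re := by
  rw [Matrix.trace, Complex.re_sum]
  exact Finset.sum_nonneg fun a _ => (Complex.le_def.mp (psd_diag h a)).1

lemma swap_herm : (swapMat d)ᴴ = swapMat d := by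
  ext p q
  simp only [Matrix.conjTranspose_apply, swapMat, Matrix.of_apply,
    apply_ite (star : ℂ → ℂ), star_one, star_zero]
  exact if_congr ⟨fun ⟨u, w⟩ => ⟨w.symm, u.symm⟩, fun ⟨u, w⟩ => ⟨w.symm, u.symm⟩⟩ rfl rfl

lemma swap_mul_self : swapMat d * swapMat d = 1 := by
  ext p q
  rw [Matrix.mul_apply]
  rw [Finset.sum_eq_single ((p.2, p.1) : Fin d × Fin d)]
  · by_cases h1 : p.1 = q.1 <;> by_cases h2 : p.2 = q.2 <;>
      simp [swapMat, Matrix.one_apply, Prod.ext_iff, h1, h2]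
  · intro r _ hr
    have hcond : ¬ (p.1 = r.2 ∧ p.2 = r.1) := by
      rintro ⟨u, w⟩; exact hr (Prod.ext w.symm u.symm)
    simp [swapMat, hcond]
  · intro h; exact absurd (Finset.mem_univ _) h

lemma one_sub_swap_psd : ((1 : Matrix (Fin d × Fin d) (Fin d × Fin d) ℂ)
    - swapMat d).PosSemidef := by
  set N := (1 : Matrix (Fin d × Fin d) (Fin d × Fin d) ℂ) - swapMat d with hN
  have hNh : Nᴴ = N := by
    rw [hN, Matrix.conjTranspose_sub, Matrix.conjTranspose_one, swap_herm]
  have hsq : N * Nᴴ = N + N := by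
    rw [hNh, hN]
    simp only [Matrix.sub_mul, Matrix.mul_sub, Matrix.one_mul, Matrix.mul_one, swap_mul_self]
    abel
  have hself : (N * Nᴴ).PosSemidef := Matrix.posSemidef_self_mul_conjTranspose N
  rw [hsq] at hself
  refine .of_dotProduct_mulVec_nonneg hNh fun x => ?_
  · have := hself.dotProduct_mulVec_nonneg x
    have h2 : dotProduct (star x) ((N + N) *ᵥ x)
        = 2 * dotProduct (star x) (N *ᵥ x) := by
      rw [Matrix.add_mulVec, dotProduct_add]; ring
    rw [h2] at this
    have h3 : (0 : ℂ) ≤ 2⁻¹ * (2 * dotProduct (star x) (N *ᵥ x)) := by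
      apply mul_nonneg _ this
      norm_num [Complex.le_def]
    rw [← mul_assoc] at h3
    norm_num at h3
    exact h3

lemma trace_swap_le {X : Matrix (Fin d × Fin d) (Fin d × Fin d) ℂ}
    (hX : X.PosSemidef) : ((swapMat d * X).trace).re ≤ X.trace.re := by
  set N := (1 : Matrix (Fin d × Fin d) (Fin d × Fin d) ℂ) - swapMat d with hN
  have key : 0 ≤ ((N * X).trace).re := by
    have hNh : Nᴴ = N := by
      rw [hN, Matrix.conjTranspose_sub, Matrix.conjTranspose_one, swap_herm]
    have hsq : N * N = N + N := by
      rw [hN]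
      simp only [Matrix.sub_mul, Matrix.mul_sub, Matrix.one_mul, Matrix.mul_one, swap_mul_self]
      abel
    have h1 : (Nᴴ * X * N).PosSemidef := hX.conjTranspose_mul_mul_same N
    rw [hNh] at h1
    have h2 : ((N * X * N).trace) = ((N * N) * X).trace := Matrix.trace_mul_cycle N X N
    have h3 : ((N * N) * X).trace = (N * X).trace + (N * X).trace := by
      rw [hsq, Matrix.add_mul, Matrix.trace_add]
    have h4 := psd_trace_re_nonneg h1
    rw [h2, h3] at h4
    simp only [Complex.add_re] at h4
    linarith
  have hexp : (N * X).trace = X.trace - (swapMat d * X).trace := by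
    rw [hN, Matrix.sub_mul, Matrix.trace_sub, Matrix.one_mul]
  rw [hexp] at key
  simp only [Complex.sub_re] at key
  linarith


lemma ptr_trace {j k : Fin t} (hjk : j ≠ k)
    (ρ : Matrix (Fin t → Fin d) (Fin t → Fin d) ℂ) :
    (ptr j k ρ).trace = ρ.trace := by
  rw [Matrix.trace, Matrix.trace]
  simp only [Matrix.diag]
  rw [sum_split hjk (fun a => ρ a a)]
  rfl

lemma ptr_psd {j k : Fin t} {ρ : Matrix (Fin t → Fin d) (Fin t → Fin d) ℂ}
    (hρ : ρ.PosSemidef) : (ptr j k ρ).PosSemidef := by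
  have hrw : ptr j k ρ = ∑ h : {m : Fin t // m ≠ j ∧ m ≠ k} → Fin d,
      (Matrix.of fun (p : Fin d × Fin d) (a : Fin t → Fin d) =>
          if a = asm j k p h then (1:ℂ) else 0) * ρ *
        (Matrix.of fun (p : Fin d × Fin d) (a : Fin t → Fin d) =>
          if a = asm j k p h then (1:ℂ) else 0)ᴴ := by
    ext p q
    rw [Matrix.sum_apply]
    refine Finset.sum_congr rfl fun h _ => ?_
    rw [Matrix.mul_apply]
    have hmid : ∀ b, ((Matrix.of fun (p : Fin d × Fin d) (a : Fin t → Fin d) =>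
        if a = asm j k p h then (1:ℂ) else 0) * ρ) p b = ρ (asm j k p h) b := by
      intro b
      rw [Matrix.mul_apply]
      simp [ite_mul]
    simp only [hmid, Matrix.conjTranspose_apply, Matrix.of_apply, apply_ite (star : ℂ → ℂ),
      star_one, star_zero, mul_ite, mul_one, mul_zero]
    rw [Finset.sum_ite_eq' Finset.univ (asm j k q h)]
    simp [ptr]
  rw [hrw]
  exact posSemidef_sum _ _ fun h _ => hρ.mul_mul_conjTranspose_same _

lemma claim1 {j k : Fin t} (hjk : j ≠ k) {C : Matrix (Fin d) (Fin d) ℂ}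
    (hC : C ∈ Matrix.unitaryGroup (Fin d) ℂ)
    (ρ : Matrix (Fin t → Fin d) (Fin t → Fin d) ℂ) :
    ∑ a ∈ Finset.univ.filter (fun a => a j = a k),
      (tpow d t C * ρ * (tpow d t C)ᴴ) a a
      = ∑ v, (kronSq d C * ptr j k ρ * (kronSq d C)ᴴ) (v,v) (v,v) := by
  rw [Finset.sum_filter]
  rw [sum_split hjk (fun a => if a j = a k then (tpow d t C * ρ * (tpow d t C)ᴴ) a a else 0)]
  have step : ∀ p : Fin d × Fin d, ∀ h,
      (if asm j k p h j = asm j k p h k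
        then (tpow d t C * ρ * (tpow d t C)ᴴ) (asm j k p h) (asm j k p h) else 0)
      = (if p.1 = p.2
          then (tpow d t C * ρ * (tpow d t C)ᴴ) (asm j k p h) (asm j k p h) else 0) := by
    intro p h
    rw [asm_j, asm_k hjk]
  simp only [step]
  rw [Fintype.sum_prod_type]
  have step2 : ∀ v : Fin d,
      (∑ w : Fin d, ∑ h : {m : Fin t // m ≠ j ∧ m ≠ k} → Fin d,
        if v = w then (tpow d t C * ρ * (tpow d t C)ᴴ) (asm j k (v,w) h) (asm j k (v,w) h)
          else 0)
      = ∑ h : {m : Fin t // m ≠ j ∧ m ≠ k} → Fin d,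
          (tpow d t C * ρ * (tpow d t C)ᴴ) (asm j k (v,v) h) (asm j k (v,v) h) := by
    intro v
    rw [Finset.sum_comm]
    refine Finset.sum_congr rfl fun h _ => ?_
    rw [Finset.sum_ite_eq Finset.univ v]
    simp
  simp only [step2]
  exact Finset.sum_congr rfl fun v _ => inner_eq hjk hC ρ v


lemma dcast_ne (hd : 2 ≤ d) : ((d:ℂ) ≠ 0) ∧ ((d:ℂ) - 1 ≠ 0) ∧ ((d:ℂ) + 1 ≠ 0) := by
  refine ⟨?_, ?_, ?_⟩
  · exact_mod_cast Nat.cast_ne_zero.mpr (by omega)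
  · intro h
    have : (d:ℂ) = 1 := by linear_combination h
    have : d = 1 := by exact_mod_cast this
    omega
  · intro h
    have : (d:ℂ) = -1 := by linear_combination h
    have h2 : ((d:ℝ) : ℂ) = ((-1 : ℝ) : ℂ) := by push_cast; exact this
    have : (d:ℝ) = -1 := Complex.ofReal_injective h2
    have : (0:ℝ) ≤ (d:ℝ) := Nat.cast_nonneg d
    linarith

lemma twirl_diag_sum (hd : 2 ≤ d) (X : Matrix (Fin d × Fin d) (Fin d × Fin d) ℂ) :
    ∑ v, haarTwirl d X (v,v) (v,v)
      = (X.trace + (swapMat d * X).trace) / ((d : ℂ) + 1) := by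
  obtain ⟨h0, h1, h2⟩ := dcast_ne hd
  have hentry : ∀ v : Fin d, haarTwirl d X (v,v) (v,v)
      = ((d : ℂ) * X.trace - (swapMat d * X).trace) / ((d : ℂ) * ((d : ℂ) ^ 2 - 1))
        + ((d : ℂ) * (swapMat d * X).trace - X.trace) / ((d : ℂ) * ((d : ℂ) ^ 2 - 1)) := by
    intro v
    simp [haarTwirl, Matrix.add_apply, Matrix.smul_apply, Matrix.one_apply, swapMat,
      smul_eq_mul]
  simp only [hentry]
  rw [Finset.sum_const, Finset.card_univ, Fintype.card_fin, nsmul_eq_mul]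
  have hsq : (d:ℂ) ^ 2 - 1 = ((d:ℂ) - 1) * ((d:ℂ) + 1) := by ring
  field_simp [hsq]
  ring

lemma haar_bound (hd : 2 ≤ d) {X : Matrix (Fin d × Fin d) (Fin d × Fin d) ℂ}
    (hX : X.PosSemidef) (hX1 : X.trace = 1) :
    (∑ v, haarTwirl d X (v,v) (v,v)).re ≤ 2 / ((d:ℝ) + 1) := by
  rw [twirl_diag_sum hd X, hX1]
  have hcast : ((d : ℂ) + 1) = (((d:ℝ) + 1 : ℝ) : ℂ) := by push_cast; ring
  rw [hcast, Complex.div_ofReal_re]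
  have hpos : (0:ℝ) < (d:ℝ) + 1 := by positivity
  rw [div_le_div_iff₀ hpos hpos]
  have hs := trace_swap_le hX
  rw [hX1] at hs
  simp only [Complex.add_re, Complex.one_re] at *
  nlinarith

lemma tpow_unitary {C : Matrix (Fin d) (Fin d) ℂ}
    (hC : C ∈ Matrix.unitaryGroup (Fin d) ℂ) :
    (tpow d t C)ᴴ * tpow d t C = 1 := by
  ext b c
  rw [Matrix.mul_apply]
  have hterm : ∀ a : Fin t → Fin d,
      (tpow d t C)ᴴ b a * tpow d t C a c
        = ∏ m, (C (a m) (c m) * (starRingEnd ℂ) (C (a m) (b m))) := by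
    intro a
    simp only [Matrix.conjTranspose_apply, tpow, Matrix.of_apply, RCLike.star_def, map_prod]
    rw [← Finset.prod_mul_distrib]
    exact Finset.prod_congr rfl fun x _ => mul_comm _ _
  simp only [hterm]
  have hswap : ∑ a : Fin t → Fin d, ∏ m, (C (a m) (c m) * (starRingEnd ℂ) (C (a m) (b m)))
      = ∏ m : Fin t, ∑ x : Fin d, (C x (c m) * (starRingEnd ℂ) (C x (b m))) := by
    rw [Finset.prod_univ_sum, Fintype.piFinset_univ]
  rw [hswap]
  simp only [fun m => unit_row hC (c m) (b m)]
  by_cases hbc : b = c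
  · simp [hbc, Matrix.one_apply]
  · obtain ⟨m, hm⟩ := Function.ne_iff.mp hbc
    rw [Finset.prod_eq_zero (Finset.mem_univ m) (by simp [hm]), Matrix.one_apply_ne hbc]

lemma tpow_trace {C : Matrix (Fin d) (Fin d) ℂ}
    (hC : C ∈ Matrix.unitaryGroup (Fin d) ℂ)
    (ρ : Matrix (Fin t → Fin d) (Fin t → Fin d) ℂ) :
    (tpow d t C * ρ * (tpow d t C)ᴴ).trace = ρ.trace := by
  rw [Matrix.trace_mul_cycle, tpow_unitary hC, Matrix.one_mul]


lemma card_eq_diag : ((Finset.univ : Finset (Fin t × Fin t)).filter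
    (fun jk => jk.1 = jk.2)).card = t := by
  have himg : (Finset.univ : Finset (Fin t × Fin t)).filter (fun jk => jk.1 = jk.2)
      = Finset.image (fun v : Fin t => (v, v)) Finset.univ := by
    ext jk
    simp only [Finset.mem_filter, Finset.mem_univ, true_and, Finset.mem_image]
    constructor
    · intro h; exact ⟨jk.1, by rw [Prod.ext_iff]; exact ⟨rfl, h⟩⟩
    · rintro ⟨v, rfl⟩; rfl
  rw [himg, Finset.card_image_of_injective _ (fun a b hab => by
    simpa [Prod.ext_iff] using hab)]
  simp

lemma card_gt_eq_lt : ((Finset.univ : Finset (Fin t × Fin t)).filter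
      (fun jk => jk.2 < jk.1)).card
    = ((Finset.univ : Finset (Fin t × Fin t)).filter (fun jk => jk.1 < jk.2)).card := by
  refine Finset.card_bij' (fun jk _ => (jk.2, jk.1)) (fun jk _ => (jk.2, jk.1))
    ?_ ?_ ?_ ?_ <;> intro a ha <;>
    first
      | (simp only [Finset.mem_filter, Finset.mem_univ, true_and] at ha ⊢; exact ha)
      | simp

lemma card_lt_pairs : 2 * ((Finset.univ : Finset (Fin t × Fin t)).filter
    (fun jk => jk.1 < jk.2)).card + t = t * t := by
  have htri : ∀ jk : Fin t × Fin t,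
      ((if jk.1 < jk.2 then (1:ℕ) else 0) + (if jk.1 = jk.2 then 1 else 0))
        + (if jk.2 < jk.1 then 1 else 0) = 1 := by
    intro jk
    rcases lt_trichotomy jk.1 jk.2 with h | h | h
    · simp [h, ne_of_lt h, asymm h]
    · simp [h, lt_irrefl]
    · simp [h, (ne_of_lt h).symm, asymm h, not_lt_of_gt h]
  have hsum : ∑ jk : Fin t × Fin t,
      (((if jk.1 < jk.2 then (1:ℕ) else 0) + (if jk.1 = jk.2 then 1 else 0))
        + (if jk.2 < jk.1 then 1 else 0)) = t * t := by
    simp only [htri]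
    simp [Finset.card_univ]
  rw [Finset.sum_add_distrib, Finset.sum_add_distrib] at hsum
  rw [Finset.sum_boole, Finset.sum_boole, Finset.sum_boole] at hsum
  rw [card_gt_eq_lt, card_eq_diag] at hsum
  simp only [Nat.cast_id] at hsum
  omega

lemma count_le {f : (Fin t → Fin d) → ℝ} (hf : ∀ a, 0 ≤ f a) :
    ∑ a ∈ Finset.univ.filter (fun a => ¬ Function.Injective a), f a
      ≤ ∑ jk ∈ (Finset.univ : Finset (Fin t × Fin t)).filter (fun jk => jk.1 < jk.2),
          ∑ a ∈ Finset.univ.filter (fun a => a jk.1 = a jk.2), f a := by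
  set P := (Finset.univ : Finset (Fin t × Fin t)).filter (fun jk => jk.1 < jk.2) with hP
  have hrhs : ∑ jk ∈ P, ∑ a ∈ Finset.univ.filter (fun a => a jk.1 = a jk.2), f a
      = ∑ a : Fin t → Fin d,
          ((P.filter (fun jk => a jk.1 = a jk.2)).card : ℝ) * f a := by
    have h1 : ∀ jk ∈ P, ∑ a ∈ Finset.univ.filter (fun a => a jk.1 = a jk.2), f a
        = ∑ a : Fin t → Fin d, if a jk.1 = a jk.2 then f a else 0 :=
      fun jk _ => Finset.sum_filter _ _
    rw [Finset.sum_congr rfl h1, Finset.sum_comm]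
    refine Finset.sum_congr rfl fun a _ => ?_
    rw [Finset.sum_ite, Finset.sum_const, Finset.sum_const_zero, add_zero, nsmul_eq_mul]
  rw [hrhs]
  have hlhs : ∑ a ∈ Finset.univ.filter (fun a => ¬ Function.Injective a), f a
      = ∑ a : Fin t → Fin d, if ¬ Function.Injective a then f a else 0 :=
    Finset.sum_filter _ _
  rw [hlhs]
  refine Finset.sum_le_sum fun a _ => ?_
  by_cases hinj : Function.Injective a
  · simp only [hinj, not_true_eq_false, if_false]
    exact mul_nonneg (Nat.cast_nonneg _) (hf a)
  · simp only [hinj, not_false_eq_true, if_true]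
    obtain ⟨x, y, hxy, hne⟩ := Function.not_injective_iff.mp hinj
    have hmem : ∃ jk, jk ∈ P.filter (fun jk => a jk.1 = a jk.2) := by
      rcases hne.lt_or_gt with h | h
      · exact ⟨(x, y), by simp [hP, Finset.mem_filter, h, hxy]⟩
      · exact ⟨(y, x), by simp [hP, Finset.mem_filter, h, hxy.symm]⟩
    obtain ⟨jk, hjk⟩ := hmem
    have hcard : 1 ≤ ((P.filter (fun jk => a jk.1 = a jk.2)).card : ℝ) := by
      exact_mod_cast Finset.card_pos.mpr ⟨jk, hjk⟩
    nlinarith [hf a]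

end Stmt16

open Stmt16

/-- Clifford twirl concentrates on the distinct subspace: for any exact
unitary 2-design ensemble `{(p_i, C_i)}` on `ℂ^d` and any state `ρ` on `(ℂ^d)^{⊗t}`,
`Tr[Λ · E_C C^{⊗t} ρ C^{⊗t,†}] ≥ 1 − (t(t−1)/d)(d/(d+1)) ≥ 1 − t²/d`. -/
theorem stmt_16 (d t : ℕ) (hd : 2 ≤ d) (m : ℕ)
    (p : Fin m → ℝ) (hp : ∀ i, 0 ≤ p i) (hp1 : ∑ i, p i = 1)
    (C : Fin m → Matrix (Fin d) (Fin d) ℂ)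
    (hC : ∀ i, C i ∈ Matrix.unitaryGroup (Fin d) ℂ)
    (hdesign : ∀ X : Matrix (Fin d × Fin d) (Fin d × Fin d) ℂ,
      ∑ i, (p i : ℂ) • (kronSq d (C i) * X * (kronSq d (C i))ᴴ) = haarTwirl d X)
    (ρ : Matrix (Fin t → Fin d) (Fin t → Fin d) ℂ)
    (hρ : ρ.PosSemidef) (hρ1 : ρ.trace = 1) :
    (1 : ℝ) - ((t : ℝ) * ((t : ℝ) - 1) / d) * (d / (d + 1)) ≤
        (Matrix.trace (distinctProj d t *
          ∑ i, (p i : ℂ) • (tpow d t (C i) * ρ * (tpow d t (C i))ᴴ))).re ∧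
      (1 : ℝ) - (t : ℝ) ^ 2 / d ≤
        (Matrix.trace (distinctProj d t *
          ∑ i, (p i : ℂ) • (tpow d t (C i) * ρ * (tpow d t (C i))ᴴ))).re := by
  classical
  set σ := ∑ i, (p i : ℂ) • (tpow d t (C i) * ρ * (tpow d t (C i))ᴴ) with hσ
  have hdiag : ∀ a, σ a a
      = ∑ i, (p i : ℂ) * ((tpow d t (C i) * ρ * (tpow d t (C i))ᴴ) a a) := by
    intro a
    rw [hσ, Matrix.sum_apply]
    exact Finset.sum_congr rfl fun i _ => rfl
  have hdiag_nonneg : ∀ a, 0 ≤ (σ a a).re := by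
    intro a
    rw [hdiag, Complex.re_sum]
    refine Finset.sum_nonneg fun i _ => ?_
    rw [Complex.re_ofReal_mul]
    exact mul_nonneg (hp i)
      (Complex.le_def.mp (psd_diag (hρ.mul_mul_conjTranspose_same _) a)).1
  have htr : σ.trace = 1 := by
    rw [hσ, Matrix.trace_sum]
    simp only [Matrix.trace_smul, tpow_trace (hC _), hρ1, smul_eq_mul, mul_one]
    rw [← Complex.ofReal_sum]
    exact_mod_cast congrArg (fun x : ℝ => (x : ℂ)) hp1
  have hG : (Matrix.trace (distinctProj d t * σ))
      = ∑ a ∈ Finset.univ.filter (fun a => Function.Injective a), σ a a := by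
    rw [Matrix.trace]
    have hterm : ∀ a, (distinctProj d t * σ).diag a
        = if Function.Injective a then σ a a else 0 := by
      intro a
      rw [Matrix.diag_apply, Matrix.mul_apply]
      have h1 : ∀ b, distinctProj d t a b * σ b a
          = if a = b then (if Function.Injective a then σ b a else 0) else 0 := by
        intro b
        simp only [distinctProj, Matrix.of_apply, ite_and, ite_mul, one_mul, zero_mul]
      simp only [h1]
      rw [Finset.sum_ite_eq Finset.univ a]
      simp
    simp only [hterm]
    rw [← Finset.sum_filter]
  have hsplit := Finset.sum_filter_add_sum_filter_not Finset.univ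
    (fun a => Function.Injective a) (fun a => σ a a)
  have htrs : σ.trace = ∑ a, σ a a := by
    rw [Matrix.trace]; rfl
  set Nn := ∑ a ∈ Finset.univ.filter (fun a => ¬ Function.Injective a), (σ a a).re with hNn
  have hGre : (Matrix.trace (distinctProj d t * σ)).re = 1 - Nn := by
    have h1 : (∑ a ∈ Finset.univ.filter (fun a => Function.Injective a), σ a a)
        = 1 - ∑ a ∈ Finset.univ.filter (fun a => ¬ Function.Injective a), σ a a := by
      rw [← htr, htrs, ← hsplit]; ring
    rw [hG, h1, Complex.sub_re, Complex.one_re, hNn, Complex.re_sum]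
  have hpair : ∀ jk : Fin t × Fin t, jk.1 < jk.2 →
      ∑ a ∈ Finset.univ.filter (fun a => a jk.1 = a jk.2), (σ a a).re
        ≤ 2 / ((d:ℝ) + 1) := by
    intro jk hlt
    have hjk : jk.1 ≠ jk.2 := ne_of_lt hlt
    set X := ptr jk.1 jk.2 ρ with hX
    have h1 : ∑ a ∈ Finset.univ.filter (fun a => a jk.1 = a jk.2), σ a a
        = ∑ v, haarTwirl d X (v,v) (v,v) := by
      calc ∑ a ∈ Finset.univ.filter (fun a => a jk.1 = a jk.2), σ a a
          = ∑ a ∈ Finset.univ.filter (fun a => a jk.1 = a jk.2),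
              ∑ i, (p i : ℂ) * ((tpow d t (C i) * ρ * (tpow d t (C i))ᴴ) a a) := by
            exact Finset.sum_congr rfl fun a _ => hdiag a
        _ = ∑ i, ∑ a ∈ Finset.univ.filter (fun a => a jk.1 = a jk.2),
              (p i : ℂ) * ((tpow d t (C i) * ρ * (tpow d t (C i))ᴴ) a a) :=
            Finset.sum_comm
        _ = ∑ i, (p i : ℂ) * ∑ v, (kronSq d (C i) * X * (kronSq d (C i))ᴴ) (v,v) (v,v) := by
            refine Finset.sum_congr rfl fun i _ => ?_
            rw [← Finset.mul_sum, claim1 hjk (hC i) ρ]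
        _ = ∑ v, (∑ i, (p i : ℂ) • (kronSq d (C i) * X * (kronSq d (C i))ᴴ)) (v,v) (v,v) := by
            have hv : ∀ v : Fin d,
                (∑ i, (p i : ℂ) • (kronSq d (C i) * X * (kronSq d (C i))ᴴ)) (v,v) (v,v)
                = ∑ i, (p i : ℂ) * (kronSq d (C i) * X * (kronSq d (C i))ᴴ) (v,v) (v,v) := by
              intro v
              rw [Matrix.sum_apply]
              exact Finset.sum_congr rfl fun i _ => rfl
            simp only [hv]
            rw [Finset.sum_comm]
            exact Finset.sum_congr rfl fun i _ => Finset.mul_sum _ _ _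
        _ = ∑ v, haarTwirl d X (v,v) (v,v) := by rw [hdesign X]
    have h2 : ∑ a ∈ Finset.univ.filter (fun a => a jk.1 = a jk.2), (σ a a).re
        = (∑ a ∈ Finset.univ.filter (fun a => a jk.1 = a jk.2), σ a a).re :=
      (Complex.re_sum _ _).symm
    rw [h2, h1]
    exact haar_bound hd (ptr_psd hρ) (by rw [hX, ptr_trace hjk, hρ1])
  have hcount := count_le (d := d) (f := fun a => (σ a a).re) hdiag_nonneg
  set P := (Finset.univ : Finset (Fin t × Fin t)).filter (fun jk => jk.1 < jk.2) with hP
  have hsum2 : ∑ jk ∈ P, ∑ a ∈ Finset.univ.filter (fun a => a jk.1 = a jk.2), (σ a a).re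
      ≤ (P.card : ℝ) * (2 / ((d:ℝ) + 1)) := by
    have := Finset.sum_le_card_nsmul P
      (fun jk => ∑ a ∈ Finset.univ.filter (fun a => a jk.1 = a jk.2), (σ a a).re)
      (2 / ((d:ℝ) + 1))
      (fun jk hjk => hpair jk (Finset.mem_filter.mp hjk).2)
    simpa [nsmul_eq_mul] using this
  have hcard := card_lt_pairs (t := t)
  have hd0 : (0:ℝ) < (d:ℝ) := by
    have : (2:ℝ) ≤ (d:ℝ) := by exact_mod_cast hd
    linarith
  have hd1 : (0:ℝ) < (d:ℝ) + 1 := by linarith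
  have hcR : (P.card : ℝ) * 2 = (t:ℝ) * (t:ℝ) - (t:ℝ) := by
    have := congrArg (fun n : ℕ => (n : ℝ)) hcard
    push_cast at this
    linarith
  have hNb : Nn ≤ ((t:ℝ) * ((t:ℝ) - 1)) / ((d:ℝ) + 1) := by
    have h3 : Nn ≤ (P.card : ℝ) * (2 / ((d:ℝ) + 1)) := le_trans hcount hsum2
    have h4 : (P.card : ℝ) * (2 / ((d:ℝ) + 1)) = ((t:ℝ) * ((t:ℝ) - 1)) / ((d:ℝ) + 1) := by
      rw [mul_div_assoc'] at *
      rw [hcR]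
      ring_nf
    linarith
  constructor
  · rw [hGre]
    have heq : ((t : ℝ) * ((t : ℝ) - 1) / d) * (d / (d + 1))
        = ((t:ℝ) * ((t:ℝ) - 1)) / ((d:ℝ) + 1) := by
      field_simp
    rw [heq]
    linarith
  · rw [hGre]
    have ht0 : (0:ℝ) ≤ (t:ℝ) := Nat.cast_nonneg t
    have h5 : ((t:ℝ) * ((t:ℝ) - 1)) / ((d:ℝ) + 1) ≤ (t:ℝ)^2 / (d:ℝ) := by
      rw [div_le_div_iff₀ hd1 hd0]
      nlinarith
    linarith
end

section
/- If ρ is a density matrix on a finite-dimensional Hilbert space, Λ a projector with Tr[Λρ] ≥ 1 − ε for some ε ∈ [0,1], and φ = ΛρΛ / Tr[ΛρΛ] the normalized projected state, then ‖ρ − φ‖₁ ≤ 2√ε (gentle measurement lemma). -/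
open Matrix
open scoped ComplexOrder

/-- The trace norm (sum of singular values) of a complex matrix: `‖M‖₁ = Tr √(Mᴴ M)`. -/
noncomputable def traceNorm {n : Type*} [Fintype n] [DecidableEq n]
    (M : Matrix n n ℂ) : ℝ :=
  ((Matrix.posSemidef_conjTranspose_mul_self M).1.eigenvectorUnitary.1 *
    diagonal (((↑) : ℝ → ℂ) ∘ (Real.sqrt ∘ (Matrix.posSemidef_conjTranspose_mul_self M).1.eigenvalues)) *
    (star (Matrix.posSemidef_conjTranspose_mul_self M).1.eigenvectorUnitary : Matrix n n ℂ)).trace.re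

namespace GentleAux

variable {n : Type*} [Fintype n] [DecidableEq n]

/-- Squared Hilbert-Schmidt norm. -/
noncomputable def hsSq (A : Matrix n n ℂ) : ℝ := ((Aᴴ * A).trace).re

lemma trace_ct_mul (A B : Matrix n n ℂ) :
    (Aᴴ * B).trace = ∑ i, ∑ j, (starRingEnd ℂ) (A j i) * B j i := by
  simp [Matrix.trace, Matrix.diag, Matrix.mul_apply, Matrix.conjTranspose_apply]

lemma hsSq_eq (A : Matrix n n ℂ) : hsSq A = ∑ i, ∑ j, ‖A j i‖ ^ 2 := by
  rw [hsSq, trace_ct_mul]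
  rw [Complex.re_sum]
  refine Finset.sum_congr rfl fun i _ => ?_
  rw [Complex.re_sum]
  refine Finset.sum_congr rfl fun j _ => ?_
  rw [mul_comm, Complex.mul_conj]
  simp [Complex.sq_norm]

lemma hsSq_nonneg (A : Matrix n n ℂ) : 0 ≤ hsSq A := by
  rw [hsSq_eq]
  positivity

lemma cs (A B : Matrix n n ℂ) :
    ‖(Aᴴ * B).trace‖ ≤ Real.sqrt (hsSq A) * Real.sqrt (hsSq B) := by
  rw [trace_ct_mul]
  calc ‖∑ i, ∑ j, (starRingEnd ℂ) (A j i) * B j i‖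
      ≤ ∑ i, ∑ j, ‖A j i‖ * ‖B j i‖ := by
        refine (norm_sum_le _ _).trans ?_
        refine Finset.sum_le_sum fun i _ => ?_
        refine (norm_sum_le _ _).trans ?_
        refine Finset.sum_le_sum fun j _ => ?_
        rw [norm_mul, Complex.norm_conj]
    _ ≤ Real.sqrt (hsSq A) * Real.sqrt (hsSq B) := by
        rw [← Real.sqrt_mul (hsSq_nonneg A), hsSq_eq, hsSq_eq]
        rw [show (∑ i, ∑ j, ‖A j i‖ ^ 2) = ∑ p : n × n, ‖A p.2 p.1‖ ^ 2 by
          rw [← Finset.sum_product']; rfl]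
        rw [show (∑ i, ∑ j, ‖B j i‖ ^ 2) = ∑ p : n × n, ‖B p.2 p.1‖ ^ 2 by
          rw [← Finset.sum_product']; rfl]
        rw [show (∑ i, ∑ j, ‖A j i‖ * ‖B j i‖)
            = ∑ p : n × n, ‖A p.2 p.1‖ * ‖B p.2 p.1‖ by
          rw [← Finset.sum_product']; rfl]
        refine (Real.le_sqrt (by positivity) (by positivity)).mpr ?_
        exact Finset.sum_mul_sq_le_sq_mul_sq _ _ _



lemma diag_nonneg' {M : Matrix n n ℂ} (hM : M.PosSemidef) (i : n) : 0 ≤ M i i := by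
  exact hM.diag_nonneg

lemma psd_trace_nonneg_c {M : Matrix n n ℂ} (hM : M.PosSemidef) : 0 ≤ M.trace := by
  rw [Matrix.trace]
  exact Finset.sum_nonneg fun i _ => diag_nonneg' hM i

lemma psd_trace_nonneg {M : Matrix n n ℂ} (hM : M.PosSemidef) : 0 ≤ M.trace.re :=
  (Complex.nonneg_iff.mp (psd_trace_nonneg_c hM)).1

lemma psd_trace_real {M : Matrix n n ℂ} (hM : M.PosSemidef) : M.trace = (M.trace.re : ℂ) := by
  have h := Complex.nonneg_iff.mp (psd_trace_nonneg_c hM)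
  exact Complex.ext rfl (by simpa using h.2.symm)

lemma sign_sq_le_one (x : ℝ) : Real.sign x ^ 2 ≤ 1 := by
  rcases lt_trichotomy x 0 with h | h | h
  · simp [Real.sign_of_neg h]
  · simp [h]
  · simp [Real.sign_of_pos h]

lemma sign_mul_self (x : ℝ) : Real.sign x * x = |x| := by
  rcases lt_trichotomy x 0 with h | h | h
  · rw [Real.sign_of_neg h, abs_of_neg h]; ring
  · simp [h]
  · rw [Real.sign_of_pos h, abs_of_pos h]; ring

open scoped MatrixOrder in
lemma key (X Y : Matrix n n ℂ) :
    traceNorm (X * Yᴴ + Y * Xᴴ) ≤ 2 * (Real.sqrt (hsSq X) * Real.sqrt (hsSq Y)) := by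
  set H : Matrix n n ℂ := X * Yᴴ + Y * Xᴴ with hHdef
  have hH : H.IsHermitian := by
    simp [Matrix.IsHermitian, hHdef, Matrix.conjTranspose_add, Matrix.conjTranspose_mul,
      add_comm]
  set V : Matrix n n ℂ := (hH.eigenvectorUnitary : Matrix n n ℂ) with hVdef
  have hV1 : V * star V = 1 := (Matrix.mem_unitaryGroup_iff).mp hH.eigenvectorUnitary.2
  have hV2 : star V * V = 1 := (Matrix.mem_unitaryGroup_iff').mp hH.eigenvectorUnitary.2
  set lam : n → ℝ := hH.eigenvalues with hlamdef
  have conj3 : ∀ d e : n → ℂ, (V * diagonal d * star V) * (V * diagonal e * star V)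
      = V * diagonal (fun i => d i * e i) * star V := by
    intro d e
    calc (V * diagonal d * star V) * (V * diagonal e * star V)
        = V * (diagonal d * ((star V * V) * (diagonal e * star V))) := by
          simp only [mul_assoc]
      _ = V * (diagonal d * diagonal e * star V) := by rw [hV2, one_mul, mul_assoc]
      _ = V * diagonal (fun i => d i * e i) * star V := by
          rw [diagonal_mul_diagonal, mul_assoc]
  have conjsub : ∀ d e : n → ℂ, V * diagonal d * star V - V * diagonal e * star V
      = V * diagonal (fun i => d i - e i) * star V := by
    intro d e
    rw [← diagonal_sub, mul_sub, sub_mul]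
  have htr : ∀ d : n → ℂ, (V * diagonal d * star V).trace = ∑ i, d i := by
    intro d
    rw [Matrix.trace_mul_comm, ← mul_assoc, hV2, one_mul, Matrix.trace_diagonal]
  have hspec : H = V * diagonal (fun i => ((lam i : ℝ) : ℂ)) * star V := by
    simpa [Function.comp_def] using hH.spectral_theorem
  set R : Matrix n n ℂ := V * diagonal (fun i => ((|lam i| : ℝ) : ℂ)) * star V with hRdef
  have hRpsd : R.PosSemidef := by
    rw [hRdef, Matrix.star_eq_conjTranspose]
    exact (posSemidef_diagonal_iff.mpr fun i =>
      Complex.zero_le_real.mpr (abs_nonneg _)).mul_mul_conjTranspose_same V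
  have hsq : R ^ 2 = Hᴴ * H := by
    rw [hH.eq, pow_two, hRdef, conj3, hspec, conj3]
    rw [show (fun i => ((|lam i| : ℝ) : ℂ) * ((|lam i| : ℝ) : ℂ))
        = (fun i => ((lam i : ℝ) : ℂ) * ((lam i : ℝ) : ℂ)) by
      funext i; rw [← Complex.ofReal_mul, ← Complex.ofReal_mul, abs_mul_abs_self]]
  have htn : traceNorm H = ∑ i, |lam i| := by
    have hR : R = (Matrix.posSemidef_conjTranspose_mul_self H).1.cfc Real.sqrt := by
      rw [← (Matrix.posSemidef_conjTranspose_mul_self H).1.cfc_eq, ← cfcₙ_eq_cfc (hf0 := by simp),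
        ← CFC.sqrt_eq_real_sqrt _ (Matrix.posSemidef_conjTranspose_mul_self H).nonneg]
      exact (CFC.sqrt_unique (by rw [← pow_two]; exact hsq) hRpsd.nonneg).symm
    have e : traceNorm H = ((Matrix.posSemidef_conjTranspose_mul_self H).1.cfc Real.sqrt).trace.re := by
      rw [traceNorm, IsHermitian.cfc, Unitary.conjStarAlgAut_apply]; rfl
    rw [e, ← hR, hRdef, htr]
    rw [Complex.re_sum]
    simp
  set S : Matrix n n ℂ := V * diagonal (fun i => ((Real.sign (lam i) : ℝ) : ℂ)) * star V
    with hSdef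
  have hSH : S * H = R := by
    rw [hSdef, hspec, conj3, hRdef]
    rw [show (fun i => ((Real.sign (lam i) : ℝ) : ℂ) * ((lam i : ℝ) : ℂ))
        = (fun i => ((|lam i| : ℝ) : ℂ)) by
      funext i; rw [← Complex.ofReal_mul, sign_mul_self]]
  have hS : Sᴴ = S := by
    rw [hSdef, ← Matrix.star_eq_conjTranspose]
    simp only [StarMul.star_mul, star_star]
    rw [Matrix.star_eq_conjTranspose (diagonal _), diagonal_conjTranspose]
    rw [show (star (fun i => ((Real.sign (lam i) : ℝ) : ℂ)))
        = (fun i => ((Real.sign (lam i) : ℝ) : ℂ)) by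
      funext i; simp [Pi.star_apply, Complex.star_def, Complex.conj_ofReal]]
    rw [Matrix.star_eq_conjTranspose, ← Matrix.star_eq_conjTranspose, mul_assoc]
  have hcontract : ∀ A : Matrix n n ℂ, hsSq (S * A) ≤ hsSq A := by
    intro A
    have h1 : (1 : Matrix n n ℂ) = V * diagonal (fun _ : n => (1 : ℂ)) * star V := by
      rw [diagonal_one, mul_one, hV1]
    have hSS : (1 : Matrix n n ℂ) - S * S
        = V * diagonal (fun i => ((1 - Real.sign (lam i) ^ 2 : ℝ) : ℂ)) * star V := by
      rw [hSdef, conj3, h1, conjsub]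
      rw [show (fun i : n => (1 : ℂ) - ((Real.sign (lam i) : ℝ) : ℂ) * ((Real.sign (lam i) : ℝ) : ℂ))
          = (fun i : n => ((1 - Real.sign (lam i) ^ 2 : ℝ) : ℂ)) by
        funext i; push_cast; ring]
    have hSSpsd : ((1 : Matrix n n ℂ) - S * S).PosSemidef := by
      rw [hSS, Matrix.star_eq_conjTranspose]
      exact (posSemidef_diagonal_iff.mpr fun i =>
        Complex.zero_le_real.mpr (by linarith [sign_sq_le_one (lam i)])).mul_mul_conjTranspose_same V
    have hpsd2 : (Aᴴ * ((1 : Matrix n n ℂ) - S * S) * A).PosSemidef :=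
      hSSpsd.conjTranspose_mul_mul_same A
    have hexp : Aᴴ * ((1 : Matrix n n ℂ) - S * S) * A = Aᴴ * A - (S * A)ᴴ * (S * A) := by
      rw [Matrix.conjTranspose_mul, hS]
      noncomm_ring
    have hge := psd_trace_nonneg hpsd2
    rw [hexp, Matrix.trace_sub, Complex.sub_re] at hge
    unfold hsSq
    linarith
  have habs : ∀ A B : Matrix n n ℂ, ((Aᴴ * B).trace).re ≤ Real.sqrt (hsSq A) * Real.sqrt (hsSq B) :=
    fun A B => (Complex.re_le_norm _).trans (cs A B)
  have hsplit : traceNorm H = ((Yᴴ * (S * X)).trace).re + ((Xᴴ * (S * Y)).trace).re := by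
    have h1 : S * H = S * (X * Yᴴ) + S * (Y * Xᴴ) := by rw [hHdef, mul_add]
    have h2 : (S * (X * Yᴴ)).trace = (Yᴴ * (S * X)).trace := by
      rw [← mul_assoc, Matrix.trace_mul_comm]
    have h3 : (S * (Y * Xᴴ)).trace = (Xᴴ * (S * Y)).trace := by
      rw [← mul_assoc, Matrix.trace_mul_comm]
    have h4 : (S * H).trace.re = ∑ i, |lam i| := by
      rw [hSH, hRdef, htr, Complex.re_sum]; simp
    rw [htn, ← h4, h1, Matrix.trace_add, Complex.add_re, h2, h3]
  rw [hsplit]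
  have b1 : ((Yᴴ * (S * X)).trace).re ≤ Real.sqrt (hsSq Y) * Real.sqrt (hsSq X) :=
    (habs Y (S * X)).trans
      (mul_le_mul_of_nonneg_left (Real.sqrt_le_sqrt (hcontract X)) (Real.sqrt_nonneg _))
  have b2 : ((Xᴴ * (S * Y)).trace).re ≤ Real.sqrt (hsSq X) * Real.sqrt (hsSq Y) :=
    (habs X (S * Y)).trans
      (mul_le_mul_of_nonneg_left (Real.sqrt_le_sqrt (hcontract Y)) (Real.sqrt_nonneg _))
  nlinarith [Real.sqrt_nonneg (hsSq X), Real.sqrt_nonneg (hsSq Y)]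

open scoped MatrixOrder in
noncomputable def psdSqrt (ρ : Matrix n n ℂ) : Matrix n n ℂ := CFC.sqrt ρ

open scoped MatrixOrder in
lemma psdSqrt_psd (ρ : Matrix n n ℂ) : (psdSqrt ρ).PosSemidef :=
  (CFC.sqrt_nonneg ρ).posSemidef

open scoped MatrixOrder in
lemma psdSqrt_mul_self {ρ : Matrix n n ℂ} (hρ : ρ.PosSemidef) : psdSqrt ρ * psdSqrt ρ = ρ :=
  CFC.sqrt_mul_sqrt_self ρ hρ.nonneg

end GentleAux

/-- gentle measurement lemma: if `ρ` is a density matrix, `Λ` a projector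
with `Tr[Λρ] ≥ 1 − ε` for some `ε ∈ [0,1]` and `Tr[ΛρΛ] > 0`, and
`φ = ΛρΛ / Tr[ΛρΛ]`, then `‖ρ − φ‖₁ ≤ 2√ε`. -/
theorem stmt_19 {n : Type*} [Fintype n] [DecidableEq n]
    (ρ Λ : Matrix n n ℂ) (hρ : ρ.PosSemidef) (hρ1 : ρ.trace = 1)
    (hΛHerm : Λ.IsHermitian) (hΛIdem : Λ * Λ = Λ)
    (ε : ℝ) (hε0 : 0 ≤ ε) (hε1 : ε ≤ 1)
    (hover : 1 - ε ≤ (Matrix.trace (Λ * ρ)).re)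
    (hpos : 0 < (Matrix.trace (Λ * ρ * Λ)).re) :
    traceNorm (ρ - (((Matrix.trace (Λ * ρ * Λ)).re : ℂ))⁻¹ • (Λ * ρ * Λ)) ≤
      2 * Real.sqrt ε := by
  classical
  open GentleAux in
  set p : ℝ := (Matrix.trace (Λ * ρ * Λ)).re with hpdef
  -- basic facts
  have htrcyc : Matrix.trace (Λ * ρ * Λ) = Matrix.trace (Λ * ρ) := by
    rw [Matrix.trace_mul_comm, ← mul_assoc, hΛIdem]
  have hover' : 1 - ε ≤ p := by
    rw [hpdef, htrcyc]; exact hover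
  have hsqrtB := GentleAux.psdSqrt_psd ρ
  set B : Matrix n n ℂ := GentleAux.psdSqrt ρ with hBdef
  have hBH : Bᴴ = B := hsqrtB.1
  have hBB : B * B = ρ := GentleAux.psdSqrt_mul_self hρ
  set s : ℝ := Real.sqrt p with hsdef
  have hs0 : 0 < s := Real.sqrt_pos.mpr hpos
  have hss : s * s = p := Real.mul_self_sqrt hpos.le
  set c : ℂ := ((s⁻¹ : ℝ) : ℂ) with hcdef
  have hcstar : star c = c := by rw [hcdef]; exact Complex.conj_ofReal _
  set v : Matrix n n ℂ := c • (Λ * B) with hvdef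
  have hvH : vᴴ = c • (B * Λ) := by
    rw [hvdef, Matrix.conjTranspose_smul, hcstar, Matrix.conjTranspose_mul, hBH, hΛHerm.eq]
  -- trace of B * Λ * B
  have htrBΛB : Matrix.trace (B * Λ * B) = (p : ℂ) := by
    have h1 : Matrix.trace (B * Λ * B) = Matrix.trace (Λ * ρ) := by
      rw [Matrix.trace_mul_comm, ← mul_assoc, hBB, Matrix.trace_mul_comm]
    have h2 : Matrix.trace (Λ * ρ) = (p : ℂ) := by
      rw [← htrcyc]
      have hpsd : (Λ * ρ * Λ).PosSemidef := by
        have := hρ.conjTranspose_mul_mul_same Λ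
        rwa [hΛHerm.eq] at this
      rw [psd_trace_real hpsd, ← hpdef]
    rw [h1, h2]
  -- inner products
  have t_uu : Matrix.trace (Bᴴ * B) = 1 := by
    rw [hBH, hBB, hρ1]
  have t_uv : Matrix.trace (Bᴴ * v) = (s : ℂ) := by
    rw [hBH, hvdef, Matrix.mul_smul, Matrix.trace_smul, ← mul_assoc, htrBΛB, smul_eq_mul, hcdef]
    rw [← Complex.ofReal_mul]
    congr 1
    rw [← hss]
    field_simp
  have t_vu : Matrix.trace (vᴴ * B) = (s : ℂ) := by
    rw [hvH, Matrix.smul_mul, Matrix.trace_smul, mul_assoc, smul_eq_mul]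
    rw [show B * (Λ * B) = B * Λ * B by rw [mul_assoc], htrBΛB, hcdef, ← Complex.ofReal_mul]
    congr 1
    rw [← hss]
    field_simp
  have t_vv : Matrix.trace (vᴴ * v) = 1 := by
    rw [hvH, hvdef, Matrix.smul_mul, Matrix.mul_smul, Matrix.trace_smul, Matrix.trace_smul]
    rw [show B * Λ * (Λ * B) = B * Λ * B by rw [mul_assoc, ← mul_assoc Λ, hΛIdem, ← mul_assoc]]
    rw [htrBΛB, smul_eq_mul, smul_eq_mul, hcdef, ← mul_assoc, ← Complex.ofReal_mul,
      ← Complex.ofReal_mul]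
    norm_cast
    rw [← hss]
    field_simp
  -- the decomposition
  set X : Matrix n n ℂ := B + v with hXdef
  set Y : Matrix n n ℂ := (2⁻¹ : ℂ) • (B - v) with hYdef
  have hYH : Yᴴ = (2⁻¹ : ℂ) • (Bᴴ - vᴴ) := by
    rw [hYdef, Matrix.conjTranspose_smul, Matrix.conjTranspose_sub]
    norm_num
  have huuH : B * Bᴴ = ρ := by rw [hBH, hBB]
  have hvvH : v * vᴴ = ((p : ℂ))⁻¹ • (Λ * ρ * Λ) := by
    rw [hvH, hvdef, Matrix.smul_mul, Matrix.mul_smul, smul_smul]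
    rw [show Λ * B * (B * Λ) = Λ * ρ * Λ by rw [mul_assoc, ← mul_assoc B, hBB, ← mul_assoc]]
    congr 1
    rw [hcdef, ← Complex.ofReal_mul, ← Complex.ofReal_inv]
    congr 1
    rw [← hss]
    field_simp
  have hkey_id : ρ - ((p : ℂ))⁻¹ • (Λ * ρ * Λ) = X * Yᴴ + Y * Xᴴ := by
    rw [hXdef, hYdef, hYH]
    rw [Matrix.conjTranspose_add]
    rw [Matrix.mul_smul, Matrix.smul_mul]
    rw [← smul_add]
    have expand : (B + v) * (Bᴴ - vᴴ) + (B - v) * (Bᴴ + vᴴ)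
        = (2 : ℂ) • (B * Bᴴ) - (2 : ℂ) • (v * vᴴ) := by
      simp only [add_mul, mul_sub, mul_add, sub_mul, two_smul]
      abel
    rw [expand, smul_sub, smul_smul, smul_smul]
    norm_num
    rw [huuH, hvvH]
  -- norms
  have hXsq : hsSq X = 2 + 2 * s := by
    rw [hsSq, hXdef, Matrix.conjTranspose_add, add_mul, mul_add, mul_add]
    rw [Matrix.trace_add, Matrix.trace_add, Matrix.trace_add, t_uu, t_uv, t_vu, t_vv]
    simp [Complex.add_re]
    ring
  have hYsq : hsSq Y = (2 - 2 * s) / 4 := by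
    rw [hsSq, hYdef, Matrix.conjTranspose_smul, Matrix.conjTranspose_sub]
    rw [Matrix.smul_mul, Matrix.mul_smul, smul_smul]
    rw [sub_mul, mul_sub, mul_sub]
    rw [show star (2⁻¹ : ℂ) * 2⁻¹ = ((4⁻¹ : ℝ) : ℂ) by norm_num]
    rw [Matrix.trace_smul, Matrix.trace_sub, Matrix.trace_sub, Matrix.trace_sub]
    rw [t_uu, t_uv, t_vu, t_vv]
    simp [Complex.smul_re, Complex.sub_re]
    ring
  have hsle1 : s ≤ 1 := by
    have := hsSq_nonneg Y
    rw [hYsq] at this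
    linarith
  calc traceNorm (ρ - ((p : ℂ))⁻¹ • (Λ * ρ * Λ))
      = traceNorm (X * Yᴴ + Y * Xᴴ) := by rw [hkey_id]
    _ ≤ 2 * (Real.sqrt (hsSq X) * Real.sqrt (hsSq Y)) := key X Y
    _ = 2 * Real.sqrt ((2 + 2 * s) * ((2 - 2 * s) / 4)) := by
        rw [hXsq, hYsq, ← Real.sqrt_mul (by positivity)]
    _ = 2 * Real.sqrt (1 - p) := by
        rw [show (2 + 2 * s) * ((2 - 2 * s) / 4) = 1 - s * s by ring, hss]
    _ ≤ 2 * Real.sqrt ε := by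
        have : (1 : ℝ) - p ≤ ε := by linarith
        have h2 := Real.sqrt_le_sqrt this
        linarith
end
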